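/- Let e ≥ 2 and let (Δ_1, …, Δ_r) be mod-e segments forming a banal multiset. Then there exist Z-segments (Δ̃_1, …, Δ̃_r) such that for each i the length of Δ̃_i equals the length of Δ_i and the reduction modulo e of the left endpoint of Δ̃_i equals the first class of Δ_i, and such that for all indices i, j: Δ̃_i precedes Δ̃_j (as Z-segments) if and only if Δ_i precedes Δ_j (as mod-e segments). (This is the lifting of a banal multisegment with matching precedences asserted in Remark 6.10 of the paper; banality guarantees that such a choice is possible.) -/

import Mathlib

/-- The list `(a, a+1, …, a+l−1)` of classes of the mod-`e` segment `(a, l)`. -/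
def mlist (e : ℕ) (a : ZMod e) (l : ℕ) : List (ZMod e) :=
  (List.range l).map fun k => a + (k : ZMod e)

/-- A mod-`e` segment `Δ` precedes `Δ'` if some sublist of the concatenation of
the list of `Δ` followed by the list of `Δ'` is a run of length strictly
greater than the lengths of both segments. -/
def mprec (e : ℕ) (Δ Δ' : ZMod e × ℕ) : Prop :=
  ∃ s : List (ZMod e), s.Sublist (mlist e Δ.1 Δ.2 ++ mlist e Δ'.1 Δ'.2) ∧
    s.Chain' (fun x y => y = x + 1) ∧ Δ.2 < s.length ∧ Δ'.2 < s.length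

/-- A Z-segment `(a, b)` precedes `(a', b')` if `a < a'`, `a' ≤ b + 1` and
`b < b'`. -/
def zprec (Δ Δ' : ℤ × ℤ) : Prop := Δ.1 < Δ'.1 ∧ Δ'.1 ≤ Δ.2 + 1 ∧ Δ.2 < Δ'.2

def zlist (p : ℤ) (l : ℕ) : List ℤ := (List.range l).map fun k => p + (k : ℤ)

lemma mlist_eq (e : ℕ) (a : ZMod e) (l : ℕ) :
    mlist e a l = (List.range l).map (fun k : ℕ => a + (k : ZMod e)) := by
  simp only [mlist, bind_pure_comp, List.map_eq_map, List.map_map]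
  rfl

lemma length_mlist (e : ℕ) (a : ZMod e) (l : ℕ) : (mlist e a l).length = l := by
  rw [mlist_eq, List.length_map, List.length_range]

lemma zlist_eq (p : ℤ) (l : ℕ) :
    zlist p l = (List.range l).map (fun k : ℕ => p + (k : ℤ)) := by
  simp only [zlist, bind_pure_comp, List.map_eq_map, List.map_map]
  rfl

lemma length_zlist (p : ℤ) (l : ℕ) : (zlist p l).length = l := by
  rw [zlist_eq, List.length_map, List.length_range]

lemma mem_mlist {e : ℕ} {x a : ZMod e} {l : ℕ} :
    x ∈ mlist e a l ↔ ∃ k : ℕ, k < l ∧ x = a + (k : ZMod e) := by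
  rw [mlist_eq]
  simp only [List.mem_map, List.mem_range]
  constructor
  · rintro ⟨k, hk, rfl⟩; exact ⟨k, hk, rfl⟩
  · rintro ⟨k, hk, rfl⟩; exact ⟨k, hk, rfl⟩

lemma mem_zlist {x p : ℤ} {l : ℕ} :
    x ∈ zlist p l ↔ ∃ k : ℕ, k < l ∧ x = p + (k : ℤ) := by
  rw [zlist_eq]
  simp only [List.mem_map, List.mem_range]
  constructor
  · rintro ⟨k, hk, rfl⟩; exact ⟨k, hk, rfl⟩
  · rintro ⟨k, hk, rfl⟩; exact ⟨k, hk, rfl⟩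

lemma mlist_append (e : ℕ) (a : ZMod e) (m k : ℕ) :
    mlist e a (m + k) = mlist e a m ++ mlist e (a + (m : ZMod e)) k := by
  simp only [mlist_eq, List.range_add, List.map_append, List.map_map]
  refine congrArg₂ _ rfl ?_
  apply List.map_congr_left
  intro j _
  simp only [Function.comp_apply]
  push_cast; ring

lemma mchain (e : ℕ) (a : ZMod e) (l : ℕ) :
    (mlist e a l).Chain' (fun x y => y = x + 1) := by
  unfold List.Chain'
  rw [List.isChain_iff_getElem]
  intro i h
  rw [length_mlist] at h
  simp only [List.get_eq_getElem, mlist_eq, List.getElem_map, List.getElem_range]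
  push_cast; ring

section lift
variable {e : ℕ} (he : 2 ≤ e) {c : ZMod e}

def lift (c x : ZMod e) : ℤ := (c.val : ℤ) + 1 + ((x - c - 1).val : ℤ)

include he

lemma lift_cast (x : ZMod e) : ((lift c x : ℤ) : ZMod e) = x := by
  haveI : NeZero e := ⟨by omega⟩
  simp only [lift]
  push_cast
  rw [ZMod.natCast_val, ZMod.natCast_val, ZMod.cast_id, ZMod.cast_id]
  ring

lemma lift_step {x : ZMod e} (hx : x ≠ c) : lift c (x + 1) = lift c x + 1 := by
  haveI : NeZero e := ⟨by omega⟩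
  haveI : Fact (1 < e) := ⟨by omega⟩
  simp only [lift]
  have h1 : x + 1 - c - 1 = (x - c - 1) + 1 := by ring
  rw [h1, ZMod.val_add, ZMod.val_one]
  have hne : (x - c - 1).val ≠ e - 1 := by
    intro h
    apply hx
    have h3 : ((x - c - 1).val : ZMod e) = x - c - 1 := by
      rw [ZMod.natCast_val, ZMod.cast_id]
    rw [h] at h3
    have h2 : x - c - 1 = -1 := by
      rw [← h3, Nat.cast_sub (by omega), ZMod.natCast_self, Nat.cast_one]; ring
    linear_combination h2
  have hlt : (x - c - 1).val < e := ZMod.val_lt _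
  have hmod : ((x - c - 1).val + 1) % e = (x - c - 1).val + 1 :=
    Nat.mod_eq_of_lt (by omega)
  rw [hmod]
  push_cast; ring

lemma lift_run (a : ZMod e) (k : ℕ) (h : ∀ j : ℕ, j < k → a + (j : ZMod e) ≠ c) :
    lift c (a + (k : ZMod e)) = lift c a + k := by
  induction k with
  | zero => simp
  | succ n ih =>
    have h1 : a + ((n + 1 : ℕ) : ZMod e) = (a + (n : ZMod e)) + 1 := by push_cast; ring
    rw [h1, lift_step he (h n (by omega)), ih (fun j hj => h j (by omega))]
    push_cast; ring

end lift

lemma run_get {t : List ℤ} (h : t.Chain' (fun x y => y = x + 1)) :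
    ∀ (k : ℕ) (hk : k < t.length) (h0 : 0 < t.length), t[k] = t[0] + (k : ℤ) := by
  intro k
  induction k with
  | zero => intro hk h0; simp
  | succ n ih =>
    intro hk h0
    have hstep := List.isChain_iff_getElem.1 h n (by omega)
    rw [hstep, ih (by omega) h0]
    push_cast; ring

lemma chain_map_lift {e : ℕ} (he : 2 ≤ e) {c : ZMod e} {s : List (ZMod e)}
    (hc : ∀ x ∈ s, x ≠ c) (h : s.Chain' (fun x y => y = x + 1)) :
    (s.map (lift c)).Chain' (fun x y => y = x + 1) := by
  unfold List.Chain' at h ⊢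
  rw [List.isChain_iff_getElem] at h ⊢
  intro i hi
  simp only [List.length_map] at hi
  simp only [List.get_eq_getElem, List.getElem_map]
  have hh := h i (by simpa using hi)
  rw [hh, lift_step he (hc _ (List.getElem_mem _))]

lemma mlist_map_lift {e : ℕ} (he : 2 ≤ e) {c a : ZMod e} {l : ℕ} (hc : c ∉ mlist e a l) :
    (mlist e a l).map (lift c) = zlist (lift c a) l := by
  rw [mlist_eq, zlist_eq, List.map_map]
  apply List.map_congr_left
  intro k hk
  rw [List.mem_range] at hk
  simp only [Function.comp_apply]
  exact lift_run he a k (fun j hj hje => hc (mem_mlist.2 ⟨j, by omega, hje.symm⟩))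

lemma forward {e : ℕ} (he : 2 ≤ e) {c a a' : ZMod e} {l l' : ℕ}
    (hc : c ∉ mlist e a l) (hc' : c ∉ mlist e a' l')
    (h : mprec e (a, l) (a', l')) :
    zprec (lift c a, lift c a + l - 1) (lift c a', lift c a' + l' - 1) := by
  obtain ⟨s, hsub, hchain, hlen1, hlen2⟩ := h
  simp only at hlen1 hlen2
  rw [List.sublist_append_iff] at hsub
  obtain ⟨s₁, s₂, rfl, h1, h2⟩ := hsub
  simp only [List.length_append] at hlen1 hlen2
  have L1 : s₁.length ≤ l := by have := h1.length_le; rwa [length_mlist] at this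
  have L2 : s₂.length ≤ l' := by have := h2.length_le; rwa [length_mlist] at this
  have hcm : ∀ x ∈ s₁ ++ s₂, x ≠ c := by
    intro x hx hxc
    subst hxc
    rcases List.mem_append.1 hx with hm | hm
    · exact hc (h1.subset hm)
    · exact hc' (h2.subset hm)
  have hrun := chain_map_lift he hcm hchain
  have e1 : (s₁.map (lift c)).Sublist (zlist (lift c a) l) := by
    rw [← mlist_map_lift he hc]; exact h1.map _
  have e2 : (s₂.map (lift c)).Sublist (zlist (lift c a') l') := by
    rw [← mlist_map_lift he hc']; exact h2.map _
  have hn1 : 1 ≤ s₁.length := by omega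
  have hn2 : 1 ≤ s₂.length := by omega
  have htlen : ((s₁ ++ s₂).map (lift c)).length = s₁.length + s₂.length := by simp
  have h0t : 0 < ((s₁ ++ s₂).map (lift c)).length := by omega
  have hleft : ∀ k (hk : k < s₁.length),
      ((s₁ ++ s₂).map (lift c))[k]'(by rw [htlen]; omega) = lift c (s₁[k]) := by
    intro k hk
    rw [List.getElem_map, List.getElem_append_left hk]
  have hright : ∀ k (hk : k < s₂.length),
      ((s₁ ++ s₂).map (lift c))[s₁.length + k]'(by rw [htlen]; omega) = lift c (s₂[k]) := by
    intro k hk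
    rw [List.getElem_map, List.getElem_append_right (by omega)]
    simp only [Nat.add_sub_cancel_left]
  have hget := run_get hrun
  have m1 : ((s₁ ++ s₂).map (lift c))[0]'h0t ∈ zlist (lift c a) l := by
    rw [hleft 0 hn1]
    exact e1.subset (List.mem_map_of_mem (List.getElem_mem _))
  have m2 : ((s₁ ++ s₂).map (lift c))[s₁.length - 1]'(by rw [htlen]; omega)
      ∈ zlist (lift c a) l := by
    rw [hleft (s₁.length - 1) (by omega)]
    exact e1.subset (List.mem_map_of_mem (List.getElem_mem _))
  have m3 : ((s₁ ++ s₂).map (lift c))[s₁.length + 0]'(by rw [htlen]; omega)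
      ∈ zlist (lift c a') l' := by
    rw [hright 0 hn2]
    exact e2.subset (List.mem_map_of_mem (List.getElem_mem _))
  have m4 : ((s₁ ++ s₂).map (lift c))[s₁.length + (s₂.length - 1)]'(by rw [htlen]; omega)
      ∈ zlist (lift c a') l' := by
    rw [hright (s₂.length - 1) (by omega)]
    exact e2.subset (List.mem_map_of_mem (List.getElem_mem _))
  rw [hget (s₁.length - 1) (by rw [htlen]; omega) h0t] at m2
  rw [hget (s₁.length + 0) (by rw [htlen]; omega) h0t] at m3
  rw [hget (s₁.length + (s₂.length - 1)) (by rw [htlen]; omega) h0t] at m4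
  rw [mem_zlist] at m1 m2 m3 m4
  obtain ⟨k1, hk1, e1'⟩ := m1
  obtain ⟨k2, hk2, e2'⟩ := m2
  obtain ⟨k3, hk3, e3'⟩ := m3
  obtain ⟨k4, hk4, e4'⟩ := m4
  refine ⟨by omega, by omega, by omega⟩

lemma backward {e : ℕ} (he : 2 ≤ e) {c : ZMod e} {Δ Δ' : ZMod e × ℕ}
    (hl : 1 ≤ Δ.2) (hl' : 1 ≤ Δ'.2)
    (h : zprec (lift c Δ.1, lift c Δ.1 + Δ.2 - 1) (lift c Δ'.1, lift c Δ'.1 + Δ'.2 - 1)) :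
    mprec e Δ Δ' := by
  obtain ⟨a, l⟩ := Δ
  obtain ⟨a', l'⟩ := Δ'
  simp only at hl hl' h ⊢
  obtain ⟨hz1, hz2, hz3⟩ := h
  simp only at hz1 hz2 hz3
  set p := lift c a with hp
  set p' := lift c a' with hp'
  set d := (p + l - p').toNat with hdd
  set m := (p' + l' - p - l).toNat with hmm
  have hd : (d : ℤ) = p + l - p' := by omega
  have hm : (m : ℤ) = p' + l' - p - l := by omega
  have hdm : d + m = l' := by omega
  have hmge : 1 ≤ m := by omega
  have hdlt : d < l := by omega
  have key : a + (l : ZMod e) = a' + (d : ZMod e) := by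
    have h1 := lift_cast he (c := c) a
    have h2 := lift_cast he (c := c) a'
    have hint : (p + l : ℤ) = p' + d := by omega
    calc a + (l : ZMod e) = ((p + (l : ℕ) : ℤ) : ZMod e) := by
          push_cast; rw [h1]
      _ = ((p' + (d : ℕ) : ℤ) : ZMod e) := by rw [hint]
      _ = a' + (d : ZMod e) := by push_cast; rw [h2]
  refine ⟨mlist e a (l + m), ?_, mchain e a (l + m), ?_, ?_⟩
  · rw [mlist_append e a l m, key, ← hdm, mlist_append e a' d m]
    exact (List.Sublist.refl _).append (List.sublist_append_right _ _)
  · rw [length_mlist]; omega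
  · rw [length_mlist]; omega

/-- Every banal family `(Δ_1, …, Δ_r)` of mod-`e` segments
(`e ≥ 2`) lifts to a family `(Δ̃_1, …, Δ̃_r)` of Z-segments of the same lengths
and with matching first classes, such that `Δ̃_i` precedes `Δ̃_j` if and only
if `Δ_i` precedes `Δ_j`, for all `i, j` (Remark 6.10 of the paper). -/
theorem exists_lift_of_banal (e : ℕ) (he : 2 ≤ e) (Δs : List (ZMod e × ℕ))
    (hpos : ∀ Δ ∈ Δs, 1 ≤ Δ.2)
    (hban : ∃ c : ZMod e, ∀ Δ ∈ Δs, c ∉ mlist e Δ.1 Δ.2) :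
    ∃ T : Fin Δs.length → ℤ × ℤ,
      (∀ i, (T i).1 ≤ (T i).2) ∧
      (∀ i, (T i).2 - (T i).1 + 1 = ((Δs.get i).2 : ℤ)) ∧
      (∀ i, (((T i).1 : ℤ) : ZMod e) = (Δs.get i).1) ∧
      (∀ i j, zprec (T i) (T j) ↔ mprec e (Δs.get i) (Δs.get j)) := by
  obtain ⟨c, hc⟩ := hban
  refine ⟨fun i => (lift c (Δs.get i).1, lift c (Δs.get i).1 + (Δs.get i).2 - 1),
    ?_, ?_, ?_, ?_⟩
  · intro i
    have hmem : Δs.get i ∈ Δs := List.get_mem Δs i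
    have := hpos _ hmem
    simp only
    omega
  · intro i
    simp only
    ring
  · intro i
    exact lift_cast he _
  · intro i j
    have hmi : Δs.get i ∈ Δs := List.get_mem Δs i
    have hmj : Δs.get j ∈ Δs := List.get_mem Δs j
    constructor
    · intro hz
      exact backward he (hpos _ hmi) (hpos _ hmj) hz
    · intro hm
      have := forward (a := (Δs.get i).1) (l := (Δs.get i).2) (a' := (Δs.get j).1)
        (l' := (Δs.get j).2) he (hc _ hmi) (hc _ hmj) ?_
      · exact this
      · simpa using hm
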